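/- A ring R is S-coherent if and only if (0 : a) is an S-finite ideal of R for every a ∈ R and the intersection of any two finitely generated ideals of R is an S-finite ideal of R. -/

import Mathlib

def IsSFinite {R : Type*} [CommRing R] (S : Submonoid R) (M : Type*) [AddCommGroup M]
    [Module R M] : Prop :=
  ∃ s ∈ S, ∃ N : Submodule R M, N.FG ∧ ∀ m : M, s • m ∈ N

def IsSFinitelyPresented {R : Type*} [CommRing R] (S : Submonoid R) (M : Type*)
    [AddCommGroup M] [Module R M] : Prop :=
  ∃ (n : ℕ) (f : (Fin n → R) →ₗ[R] M), Function.Surjective f ∧ IsSFinite S (LinearMap.ker f)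

/-- An ideal `I` is `S`-finite: `s • I ⊆ J ⊆ I` for some finitely generated ideal `J`, `s ∈ S`. -/
def IsSFiniteIdeal {R : Type*} [CommRing R] (S : Submonoid R) (I : Ideal R) : Prop :=
  ∃ s ∈ S, ∃ J : Ideal R, J.FG ∧ J ≤ I ∧ ∀ x ∈ I, s * x ∈ J

/-- `R` is `S`-coherent if every finitely generated ideal is `S`-finitely presented. -/
def IsSCoherentRing (R : Type*) [CommRing R] (S : Submonoid R) : Prop :=
  ∀ I : Ideal R, I.FG → IsSFinitelyPresented S ↥I

section Helpers

variable {R : Type*} [CommRing R] (S : Submonoid R)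

theorem isSFinite_of_surjective {M N : Type*} [AddCommGroup M] [Module R M]
    [AddCommGroup N] [Module R N] (φ : M →ₗ[R] N) (hφ : Function.Surjective φ)
    (h : IsSFinite S M) : IsSFinite S N := by
  obtain ⟨s, hs, P, hPfg, hP⟩ := h
  refine ⟨s, hs, P.map φ, hPfg.map φ, fun n => ?_⟩
  obtain ⟨m, rfl⟩ := hφ n
  rw [← map_smul]
  exact Submodule.mem_map_of_mem (hP m)

theorem isSFinite_ext {M N : Type*} [AddCommGroup M] [Module R M]
    [AddCommGroup N] [Module R N] (φ : M →ₗ[R] N) (hφ : Function.Surjective φ)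
    (hker : IsSFinite S (LinearMap.ker φ)) (hN : IsSFinite S N) : IsSFinite S M := by
  obtain ⟨t, ht, P, hPfg, hP⟩ := hN
  obtain ⟨k, w, hw⟩ := Submodule.fg_iff_exists_fin_generating_family.mp hPfg
  choose b hb using fun i => hφ (w i)
  obtain ⟨s, hs, Q, hQfg, hQ⟩ := hker
  refine ⟨s * t, S.mul_mem hs ht,
    Q.map (LinearMap.ker φ).subtype ⊔ Submodule.span R (Set.range b),
    (hQfg.map _).sup (Submodule.fg_span (Set.finite_range b)), fun m => ?_⟩
  have h1 : t • φ m ∈ Submodule.span R (Set.range w) := hw ▸ hP (φ m)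
  obtain ⟨c, hc⟩ := (Submodule.mem_span_range_iff_exists_fun R).mp h1
  have hm : t • m - ∑ i, c i • b i ∈ LinearMap.ker φ := by
    rw [LinearMap.mem_ker, map_sub, map_smul, map_sum]
    simp_rw [map_smul, hb]
    rw [hc, sub_self]
  have h3 : s • (t • m - ∑ i, c i • b i) ∈ Q.map (LinearMap.ker φ).subtype :=
    ⟨_, hQ ⟨_, hm⟩, rfl⟩
  have hu : (∑ i, c i • b i) ∈ Submodule.span R (Set.range b) :=
    Submodule.sum_smul_mem _ _ fun i _ => Submodule.subset_span ⟨i, rfl⟩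
  have key : (s * t) • m = s • (t • m - ∑ i, c i • b i) + s • ∑ i, c i • b i := by
    rw [← smul_add, sub_add_cancel, mul_smul]
  rw [key]
  exact Submodule.add_mem _ (Submodule.mem_sup_left h3)
    (Submodule.mem_sup_right (Submodule.smul_mem _ _ hu))

theorem isSFinite_free (ι : Type*) [Fintype ι] : IsSFinite S (ι → R) :=
  ⟨1, S.one_mem, ⊤, Module.Finite.fg_top, fun _ => Submodule.mem_top⟩

theorem exists_section {M : Type*} [AddCommGroup M] [Module R M] {ι : Type*} [Fintype ι]
    [DecidableEq ι] (p : M →ₗ[R] (ι → R)) (hp : Function.Surjective p) :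
    ∃ σ : (ι → R) →ₗ[R] M, ∀ x, p (σ x) = x := by
  choose b hb using fun i => hp (Pi.basisFun R ι i)
  refine ⟨(Pi.basisFun R ι).constr ℕ b, fun x => ?_⟩
  have : p.comp ((Pi.basisFun R ι).constr ℕ b) = LinearMap.id := by
    apply (Pi.basisFun R ι).ext
    intro i
    rw [LinearMap.comp_apply, Module.Basis.constr_basis, hb, LinearMap.id_apply]
  exact DFunLike.congr_fun this x

theorem isSFinite_ker_of_free {M : Type*} [AddCommGroup M] [Module R M] {ι : Type*}
    [Fintype ι] [DecidableEq ι] (p : M →ₗ[R] (ι → R)) (hp : Function.Surjective p)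
    (hM : IsSFinite S M) : IsSFinite S (LinearMap.ker p) := by
  obtain ⟨σ, hσ⟩ := exists_section p hp
  have hretr : ∀ m : M, m - σ (p m) ∈ LinearMap.ker p := fun m => by
    simp [LinearMap.mem_ker, map_sub, hσ]
  let r : M →ₗ[R] LinearMap.ker p :=
    LinearMap.codRestrict _ (LinearMap.id - σ.comp p) hretr
  refine isSFinite_of_surjective S r ?_ hM
  rintro ⟨m, hm⟩
  refine ⟨m, Subtype.ext ?_⟩
  have : p m = 0 := hm
  simp [r, this]

end Helpers

section Schanuel

variable {R : Type*} [CommRing R] (S : Submonoid R)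

set_option synthInstance.maxHeartbeats 1000000 in
set_option maxHeartbeats 1000000 in
theorem isSFinite_ker_of_sfp {M : Type*} [AddCommGroup M] [Module R M] {ι : Type*}
    [Fintype ι] [DecidableEq ι] (hM : IsSFinitelyPresented S M) (g : (ι → R) →ₗ[R] M)
    (hg : Function.Surjective g) : IsSFinite S (LinearMap.ker g) := by
  obtain ⟨n, f, hf, hkf⟩ := hM
  set D : ((Fin n → R) × (ι → R)) →ₗ[R] M :=
    f.comp (LinearMap.fst R _ _) - g.comp (LinearMap.snd R _ _) with hD
  set X := LinearMap.ker D with hX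
  have memX : ∀ z : (Fin n → R) × (ι → R), z ∈ X ↔ f z.1 = g z.2 := by
    intro z
    rw [hX, LinearMap.mem_ker, hD, LinearMap.sub_apply, LinearMap.comp_apply,
      LinearMap.comp_apply, sub_eq_zero]
    rfl
  set p2 : X →ₗ[R] (ι → R) := (LinearMap.snd R _ _).comp X.subtype with hp2def
  have hp2 : Function.Surjective p2 := by
    intro x
    obtain ⟨y, hy⟩ := hf (g x)
    exact ⟨⟨(y, x), (memX _).2 hy⟩, rfl⟩
  have hkerp2 : IsSFinite S (LinearMap.ker p2) := by
    have hj0mem : ∀ k : LinearMap.ker f,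
        ((LinearMap.inl R (Fin n → R) (ι → R)).comp (LinearMap.ker f).subtype) k ∈ X := by
      intro k
      rw [memX]
      simp [k.2.out]
    set j0 : LinearMap.ker f →ₗ[R] X :=
      LinearMap.codRestrict X
        ((LinearMap.inl R (Fin n → R) (ι → R)).comp (LinearMap.ker f).subtype) hj0mem with hj0
    have hj0ker : ∀ k, j0 k ∈ LinearMap.ker p2 := fun k => rfl
    set j : LinearMap.ker f →ₗ[R] LinearMap.ker p2 :=
      LinearMap.codRestrict _ j0 hj0ker with hj
    refine isSFinite_of_surjective S j ?_ hkf
    rintro ⟨⟨⟨y, x⟩, hzX⟩, hz2⟩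
    have hx0 : x = 0 := hz2
    subst hx0
    have hfy : f y = 0 := by
      rw [(memX _).1 hzX, map_zero]
    exact ⟨⟨y, hfy⟩, Subtype.ext (Subtype.ext rfl)⟩
  have hXfin : IsSFinite S X := isSFinite_ext S p2 hp2 hkerp2 (isSFinite_free S ι)
  set p1 : X →ₗ[R] (Fin n → R) := (LinearMap.fst R _ _).comp X.subtype with hp1def
  have hp1 : Function.Surjective p1 := by
    intro y
    obtain ⟨x, hx⟩ := hg (f y)
    exact ⟨⟨(y, x), (memX _).2 hx.symm⟩, rfl⟩
  have hker1 : IsSFinite S (LinearMap.ker p1) := isSFinite_ker_of_free S p1 hp1 hXfin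
  set e : LinearMap.ker p1 →ₗ[R] (ι → R) :=
    (LinearMap.snd R _ _).comp (X.subtype.comp (LinearMap.ker p1).subtype) with he
  have hemem : ∀ z, e z ∈ LinearMap.ker g := by
    rintro ⟨⟨⟨y, x⟩, hzX⟩, hz1⟩
    have hy0 : y = 0 := hz1
    have : g x = 0 := by rw [← (memX _).1 hzX, hy0, map_zero]
    exact this
  refine isSFinite_of_surjective S (LinearMap.codRestrict _ e hemem) ?_ hker1
  rintro ⟨x, hxg⟩
  have hmem : ((0 : Fin n → R), x) ∈ X := by
    rw [memX]
    rw [map_zero]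
    exact (LinearMap.mem_ker.mp hxg).symm
  exact ⟨⟨⟨_, hmem⟩, rfl⟩, rfl⟩

end Schanuel

section Conv

variable {R : Type*} [CommRing R] (S : Submonoid R)

theorem isSFiniteIdeal_of_isSFinite {I : Ideal R} (h : IsSFinite S I) :
    IsSFiniteIdeal S I := by
  obtain ⟨s, hs, N, hNfg, hN⟩ := h
  refine ⟨s, hs, N.map I.subtype, hNfg.map _, Submodule.map_subtype_le I N, fun x hx => ?_⟩
  exact ⟨s • ⟨x, hx⟩, hN ⟨x, hx⟩, rfl⟩

theorem isSFinite_of_isSFiniteIdeal {I : Ideal R} (h : IsSFiniteIdeal S I) :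
    IsSFinite S I := by
  obtain ⟨s, hs, J, hJfg, hJI, hsJ⟩ := h
  obtain ⟨k, w, hw⟩ := Submodule.fg_iff_exists_fin_generating_family.mp hJfg
  have hwI : ∀ i, w i ∈ I := fun i => hJI (hw ▸ Submodule.subset_span ⟨i, rfl⟩)
  set b : Fin k → I := fun i => ⟨w i, hwI i⟩ with hb
  refine ⟨s, hs, Submodule.span R (Set.range b), Submodule.fg_span (Set.finite_range b),
    fun m => ?_⟩
  have h1 : s * m.1 ∈ Submodule.span R (Set.range w) := hw ▸ hsJ m.1 m.2
  obtain ⟨c, hc⟩ := (Submodule.mem_span_range_iff_exists_fun R).mp h1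
  have : s • m = ∑ i, c i • b i := by
    apply Subtype.ext
    push_cast
    rw [smul_eq_mul]
    exact hc.symm
  rw [this]
  exact Submodule.sum_smul_mem _ _ fun i _ => Submodule.subset_span ⟨i, rfl⟩

end Conv

section Comb

variable {R : Type*} [CommRing R]

/-- The canonical surjection from a finite free module onto the span of a finite family. -/
def combMap {ι : Type*} [Fintype ι] (v : ι → R) :
    (ι → R) →ₗ[R] (Submodule.span R (Set.range v)) :=
  LinearMap.codRestrict _ (Fintype.linearCombination R v) fun c => by
    rw [Fintype.linearCombination_apply]
    exact Submodule.sum_smul_mem _ _ fun i _ => Submodule.subset_span ⟨i, rfl⟩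

theorem combMap_apply {ι : Type*} [Fintype ι] (v : ι → R) (x : ι → R) :
    (combMap v x : R) = ∑ i, x i • v i := rfl

theorem combMap_surjective {ι : Type*} [Fintype ι] (v : ι → R) :
    Function.Surjective (combMap v) := by
  rintro ⟨x, hx⟩
  obtain ⟨c, hc⟩ := (Submodule.mem_span_range_iff_exists_fun R).mp hx
  exact ⟨c, Subtype.ext hc⟩

theorem mem_ker_combMap {ι : Type*} [Fintype ι] (v : ι → R) (x : ι → R) :
    x ∈ LinearMap.ker (combMap v) ↔ ∑ i, x i • v i = 0 := by
  rw [LinearMap.mem_ker]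
  constructor
  · intro h
    rw [← combMap_apply]
    exact congrArg Subtype.val h
  · intro h
    exact Subtype.ext h

end Comb

section Forward

variable {R : Type*} [CommRing R] (S : Submonoid R)

theorem ker_combMap_isSFinite_of_coherent
    (hcoh : ∀ I : Ideal R, I.FG → IsSFinitelyPresented S ↥I)
    {ι : Type*} [Fintype ι] [DecidableEq ι] (v : ι → R) :
    IsSFinite S (LinearMap.ker (combMap v)) :=
  isSFinite_ker_of_sfp S (hcoh _ (Submodule.fg_span (Set.finite_range v))) (combMap v)
    (combMap_surjective v)

theorem forward_colon (hcoh : ∀ I : Ideal R, I.FG → IsSFinitelyPresented S ↥I) (a : R) :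
    IsSFiniteIdeal S ((⊥ : Ideal R).colon (Ideal.span {a})) := by
  set v : Fin 1 → R := fun _ => a with hv
  have hker := ker_combMap_isSFinite_of_coherent S hcoh v
  set e : LinearMap.ker (combMap v) →ₗ[R] R :=
    (LinearMap.proj 0).comp (LinearMap.ker (combMap v)).subtype with he
  have hemem : ∀ x : LinearMap.ker (combMap v),
      e x ∈ (⊥ : Ideal R).colon (Ideal.span {a}) := by
    intro x
    rw [Ideal.mem_colon_span_singleton]
    have := (mem_ker_combMap v x.1).1 x.2
    rw [Fin.sum_univ_one] at this
    exact this
  apply isSFiniteIdeal_of_isSFinite S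
  refine isSFinite_of_surjective S (LinearMap.codRestrict _ e hemem) ?_ hker
  rintro ⟨r, hr⟩
  have hra : r * a = 0 := Ideal.mem_bot.mp (Ideal.mem_colon_span_singleton.mp hr)
  have hx : (fun _ => r : Fin 1 → R) ∈ LinearMap.ker (combMap v) :=
    (mem_ker_combMap v _).2 (by rw [Fin.sum_univ_one]; simpa [smul_eq_mul] using hra)
  exact ⟨⟨_, hx⟩, rfl⟩

theorem forward_inter (hcoh : ∀ I : Ideal R, I.FG → IsSFinitelyPresented S ↥I)
    (I J : Ideal R) (hI : I.FG) (hJ : J.FG) : IsSFiniteIdeal S (I ⊓ J) := by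
  obtain ⟨n, v, hv⟩ := Submodule.fg_iff_exists_fin_generating_family.mp hI
  obtain ⟨m, w, hw⟩ := Submodule.fg_iff_exists_fin_generating_family.mp hJ
  set u : Fin n ⊕ Fin m → R := Sum.elim v w with hu
  have hker := ker_combMap_isSFinite_of_coherent S hcoh u
  set e : LinearMap.ker (combMap u) →ₗ[R] R :=
    (Fintype.linearCombination R v).comp
      ((LinearMap.funLeft R R Sum.inl).comp (LinearMap.ker (combMap u)).subtype) with he
  have heval : ∀ x : LinearMap.ker (combMap u), e x = ∑ i, x.1 (Sum.inl i) • v i :=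
    fun x => rfl
  have hsum : ∀ x : LinearMap.ker (combMap u),
      (∑ i, x.1 (Sum.inl i) • v i) + (∑ j, x.1 (Sum.inr j) • w j) = 0 := by
    intro x
    have := (mem_ker_combMap u x.1).1 x.2
    rwa [Fintype.sum_sum_type] at this
  have hemem : ∀ x, e x ∈ I ⊓ J := by
    intro x
    rw [heval]
    refine Submodule.mem_inf.mpr ⟨?_, ?_⟩
    · rw [← hv]
      exact Submodule.sum_smul_mem _ _ fun i _ => Submodule.subset_span ⟨i, rfl⟩
    · have h2 : (∑ i, x.1 (Sum.inl i) • v i) = -∑ j, x.1 (Sum.inr j) • w j :=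
        eq_neg_of_add_eq_zero_left (hsum x)
      rw [h2, ← hw]
      exact Submodule.neg_mem _
        (Submodule.sum_smul_mem _ _ fun j _ => Submodule.subset_span ⟨j, rfl⟩)
  apply isSFiniteIdeal_of_isSFinite S
  refine isSFinite_of_surjective S (LinearMap.codRestrict _ e hemem) ?_ hker
  rintro ⟨c, hc⟩
  obtain ⟨cv, hcv⟩ := (Submodule.mem_span_range_iff_exists_fun R).mp (hv ▸ hc.1)
  obtain ⟨cw, hcw⟩ := (Submodule.mem_span_range_iff_exists_fun R).mp
    (hw ▸ (Submodule.neg_mem J hc.2))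
  have hx : Sum.elim cv cw ∈ LinearMap.ker (combMap u) := by
    refine (mem_ker_combMap u _).2 ?_
    rw [Fintype.sum_sum_type]
    simp only [hu, Sum.elim_inl, Sum.elim_inr]
    rw [hcv, hcw, add_neg_cancel]
  refine ⟨⟨_, hx⟩, Subtype.ext ?_⟩
  show e ⟨_, hx⟩ = c
  rw [heval]
  simpa using hcv

end Forward

section Reverse

variable {R : Type*} [CommRing R] (S : Submonoid R)

set_option maxHeartbeats 1000000 in
set_option synthInstance.maxHeartbeats 1000000 in
theorem key_induction
    (h0 : ∀ a : R, IsSFiniteIdeal S ((⊥ : Ideal R).colon (Ideal.span {a})))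
    (hInt : ∀ I J : Ideal R, I.FG → J.FG → IsSFiniteIdeal S (I ⊓ J)) :
    ∀ (n : ℕ) (v : Fin n → R), IsSFinite S (LinearMap.ker (combMap v)) := by
  intro n
  induction n with
  | zero =>
    intro v
    refine ⟨1, S.one_mem, ⊥, Submodule.fg_bot, fun m => ?_⟩
    have : m = 0 := Subtype.ext (funext fun i => i.elim0)
    rw [this, smul_zero]
    exact Submodule.zero_mem _
  | succ n ih =>
    intro v
    set a := v (Fin.last n) with ha
    set v' : Fin n → R := fun i => v i.castSucc with hv'
    set I' : Ideal R := Submodule.span R (Set.range v') with hI'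
    set Q : Ideal R := I'.colon (Ideal.span {a}) with hQdef
    have hI'fg : I'.FG := Submodule.fg_span (Set.finite_range v')
    -- Step A : Q is S-finite
    have hQfin : IsSFinite S Q := by
      have hφmem : ∀ q : Q, ((LinearMap.lsmul R R a).comp Q.subtype) q
          ∈ I' ⊓ Ideal.span {a} := by
        intro q
        refine Submodule.mem_inf.mpr ⟨?_, ?_⟩
        · have := Ideal.mem_colon_span_singleton.mp q.2
          simpa [LinearMap.lsmul_apply, smul_eq_mul, mul_comm] using this
        · exact Ideal.mem_span_singleton'.mpr ⟨q.1, mul_comm _ _⟩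
      set φ : Q →ₗ[R] ↥(I' ⊓ Ideal.span {a}) :=
        LinearMap.codRestrict _ ((LinearMap.lsmul R R a).comp Q.subtype) hφmem with hφ
      have hφs : Function.Surjective φ := by
        rintro ⟨x, hx⟩
        obtain ⟨r, hr⟩ := Ideal.mem_span_singleton'.mp (Submodule.mem_inf.mp hx).2
        have hrQ : r ∈ Q := Ideal.mem_colon_span_singleton.mpr
          (by rw [hr]; exact (Submodule.mem_inf.mp hx).1)
        refine ⟨⟨r, hrQ⟩, Subtype.ext ?_⟩
        show a • r = x
        rw [smul_eq_mul, mul_comm]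
        exact hr
      have hkerφ : IsSFinite S (LinearMap.ker φ) := by
        set Z : Ideal R := (⊥ : Ideal R).colon (Ideal.span {a}) with hZdef
        have hZQ : ∀ z : Z, (z : R) ∈ Q := by
          intro z
          refine Ideal.mem_colon_span_singleton.mpr ?_
          have := Ideal.mem_bot.mp (Ideal.mem_colon_span_singleton.mp z.2)
          rw [this]
          exact Submodule.zero_mem _
        set j0 : Z →ₗ[R] Q := LinearMap.codRestrict Q Z.subtype hZQ with hj0
        have hj0ker : ∀ z, j0 z ∈ LinearMap.ker φ := by
          intro z
          have hza : a * z.1 = 0 := by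
            rw [mul_comm]
            exact Ideal.mem_bot.mp (Ideal.mem_colon_span_singleton.mp z.2)
          exact LinearMap.mem_ker.mpr (Subtype.ext hza)
        refine isSFinite_of_surjective S (LinearMap.codRestrict _ j0 hj0ker) ?_
          (isSFinite_of_isSFiniteIdeal S (h0 a))
        rintro ⟨⟨x, hxQ⟩, hxker⟩
        have hax : a * x = 0 := congrArg Subtype.val hxker
        have hxZ : x ∈ Z := Ideal.mem_colon_span_singleton.mpr
          (Ideal.mem_bot.mpr (by rw [mul_comm]; exact hax))
        exact ⟨⟨x, hxZ⟩, Subtype.ext (Subtype.ext rfl)⟩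
      exact isSFinite_ext S φ hφs hkerφ
        (isSFinite_of_isSFiniteIdeal S (hInt I' (Ideal.span {a}) hI'fg ⟨{a}, by simp⟩))
    -- Step B
    have hπmem : ∀ x : LinearMap.ker (combMap v),
        ((LinearMap.proj (Fin.last n)).comp (LinearMap.ker (combMap v)).subtype) x ∈ Q := by
      intro x
      have hx := (mem_ker_combMap v x.1).1 x.2
      rw [Fin.sum_univ_castSucc] at hx
      refine Ideal.mem_colon_span_singleton.mpr ?_
      have key : x.1 (Fin.last n) * a = -∑ i : Fin n, x.1 i.castSucc • v i.castSucc := by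
        rw [← smul_eq_mul]
        exact eq_neg_of_add_eq_zero_right hx
      show x.1 (Fin.last n) * a ∈ I'
      rw [key]
      exact Submodule.neg_mem _
        (Submodule.sum_smul_mem _ _ fun i _ => Submodule.subset_span ⟨i, rfl⟩)
    set π : LinearMap.ker (combMap v) →ₗ[R] Q :=
      LinearMap.codRestrict Q
        ((LinearMap.proj (Fin.last n)).comp (LinearMap.ker (combMap v)).subtype) hπmem with hπ
    have hπs : Function.Surjective π := by
      rintro ⟨r, hr⟩
      have hra : r • a ∈ I' := by
        have := Ideal.mem_colon_span_singleton.mp hr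
        simpa [smul_eq_mul] using this
      obtain ⟨c, hc⟩ := (Submodule.mem_span_range_iff_exists_fun R).mp hra
      have hx : Fin.snoc (fun i => -c i) r ∈ LinearMap.ker (combMap v) := by
        refine (mem_ker_combMap v _).2 ?_
        rw [Fin.sum_univ_castSucc]
        simp only [Fin.snoc_castSucc, Fin.snoc_last]
        have : ∑ i : Fin n, (-c i) • v i.castSucc = -(r • a) := by
          rw [← hc]
          simp [neg_smul, Finset.sum_neg_distrib, hv']
        rw [this, neg_add_cancel]
      have hπval : ∀ z : LinearMap.ker (combMap v), (π z : R) = z.1 (Fin.last n) :=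
        fun z => rfl
      refine ⟨⟨_, hx⟩, Subtype.ext ?_⟩
      rw [hπval]
      simp
    -- kernel of π is S-finite via the induction hypothesis
    have hkerπ : IsSFinite S (LinearMap.ker π) := by
      set L : (Fin n → R) →ₗ[R] (Fin (n + 1) → R) :=
        LinearMap.pi (fun i => Fin.lastCases 0 (fun j => LinearMap.proj j) i) with hL
      have hLcast : ∀ (y : Fin n → R) (j : Fin n), L y j.castSucc = y j := by
        intro y j
        simp [hL, LinearMap.pi_apply, Fin.lastCases_castSucc]
      have hLlast : ∀ y : Fin n → R, L y (Fin.last n) = 0 := by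
        intro y
        simp [hL, LinearMap.pi_apply, Fin.lastCases_last]
      have hm1mem : ∀ y : LinearMap.ker (combMap v'),
          (L.comp (LinearMap.ker (combMap v')).subtype) y ∈ LinearMap.ker (combMap v) := by
        intro y
        refine (mem_ker_combMap v _).2 ?_
        rw [Fin.sum_univ_castSucc]
        have hy := (mem_ker_combMap v' y.1).1 y.2
        simp only [LinearMap.comp_apply, Submodule.coe_subtype, hLcast, hLlast]
        rw [zero_smul, add_zero]
        exact hy
      set m1 : LinearMap.ker (combMap v') →ₗ[R] LinearMap.ker (combMap v) :=
        LinearMap.codRestrict _ (L.comp (LinearMap.ker (combMap v')).subtype) hm1mem with hm1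
      have hm1ker : ∀ y, m1 y ∈ LinearMap.ker π := by
        intro y
        refine LinearMap.mem_ker.mpr (Subtype.ext ?_)
        show L y.1 (Fin.last n) = 0
        exact hLlast y.1
      refine isSFinite_of_surjective S (LinearMap.codRestrict _ m1 hm1ker) ?_ (ih v')
      rintro ⟨⟨x, hxker⟩, hxπ⟩
      have hxlast : x (Fin.last n) = 0 := congrArg Subtype.val hxπ
      have hy : (fun j => x j.castSucc) ∈ LinearMap.ker (combMap v') := by
        refine (mem_ker_combMap v' _).2 ?_
        have hx := (mem_ker_combMap v x).1 hxker
        rw [Fin.sum_univ_castSucc, hxlast, zero_smul, add_zero] at hx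
        exact hx
      refine ⟨⟨_, hy⟩, Subtype.ext (Subtype.ext ?_)⟩
      show L (fun j => x j.castSucc) = x
      funext i
      refine Fin.lastCases ?_ (fun j => ?_) i
      · rw [hLlast, hxlast]
      · rw [hLcast]
    exact isSFinite_ext S π hπs hkerπ hQfin

end Reverse

theorem scoherent_iff_annihilator_and_inter {R : Type*} [CommRing R] (S : Submonoid R) :
    IsSCoherentRing R S ↔
      (∀ a : R, IsSFiniteIdeal S ((⊥ : Ideal R).colon (Ideal.span {a}))) ∧
        ∀ I J : Ideal R, I.FG → J.FG → IsSFiniteIdeal S (I ⊓ J) := by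
  constructor
  · intro hcoh
    exact ⟨forward_colon S hcoh, forward_inter S hcoh⟩
  · rintro ⟨h0, hInt⟩ I hIfg
    obtain ⟨n, v, hv⟩ := Submodule.fg_iff_exists_fin_generating_family.mp hIfg
    subst hv
    exact ⟨n, combMap v, combMap_surjective v, key_induction S h0 hInt n v⟩
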